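/- Blissard's binomial identity C(B, p) = (−1)^p/(p+1): for every natural number p, letting P(X) := ∏_{j=0}^{p−1} (X − j) ∈ ℚ[X] (the falling factorial polynomial, with P = 1 for p = 0), one has ∑_{k=0}^{p} (coeff of X^k in P) · B_k = (−1)^p · p! / (p+1). -/

import Mathlib

open Polynomial

noncomputable def bernL (f : ℚ[X]) : ℚ := f.sum fun k a => a * _root_.bernoulli k

lemma bernL_add (f g : ℚ[X]) : bernL (f + g) = bernL f + bernL g :=
  Polynomial.sum_add_index f g _ (by simp) (by intros; ring)

lemma bernL_smul (c : ℚ) (f : ℚ[X]) : bernL (c • f) = c * bernL f := by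
  unfold bernL
  rw [Polynomial.sum_smul_index _ _ _ (by simp), Polynomial.sum_def, Polynomial.sum_def,
    Finset.mul_sum]
  exact Finset.sum_congr rfl fun k _ => by ring

lemma bernL_X_add_one_pow (n : ℕ) :
    bernL ((X + 1) ^ n) = _root_.bernoulli n + if n = 1 then 1 else 0 := by
  have hd : ((X + 1 : ℚ[X]) ^ n).natDegree < n + 1 := by
    have h := Polynomial.natDegree_pow_le (p := (X + 1 : ℚ[X])) (n := n)
    have h1 : (X + 1 : ℚ[X]).natDegree ≤ 1 := Polynomial.natDegree_X_add_C (1 : ℚ) ▸ le_refl _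
    nlinarith
  rw [bernL, Polynomial.sum_over_range' _ (by simp) (n + 1) hd]
  simp only [Polynomial.coeff_X_add_one_pow]
  rw [Finset.sum_range_succ, _root_.sum_bernoulli]
  simp [add_comm]

lemma bernL_comp_add_one (f : ℚ[X]) :
    bernL (f.comp (X + 1)) = bernL f + f.derivative.eval 0 := by
  induction f using Polynomial.induction_on' with
  | add p q hp hq =>
    rw [Polynomial.add_comp, bernL_add, bernL_add, Polynomial.derivative_add,
      Polynomial.eval_add, hp, hq]; ring
  | monomial n c =>
    rw [Polynomial.monomial_comp, Polynomial.derivative_monomial, ← Polynomial.smul_eq_C_mul,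
      bernL_smul, bernL_X_add_one_pow]
    have : bernL (monomial n c) = c * _root_.bernoulli n := by
      unfold bernL; rw [Polynomial.sum_monomial_index c _ (by simp)]
    rw [this]
    match n with
    | 0 => simp
    | 1 => simp [_root_.bernoulli_one]; ring
    | (m+2) => simp

lemma ff_natDegree_lt (p : ℕ) :
    (∏ j ∈ Finset.range p, (X - C (j : ℚ))).natDegree < p + 1 := by
  have h := Polynomial.natDegree_prod_le (Finset.range p) (fun j => (X - C (j : ℚ)))
  have h2 : ∑ j ∈ Finset.range p, (X - C (j : ℚ)).natDegree = p := by
    simp only [Polynomial.natDegree_X_sub_C]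
    simp
  rw [h2] at h
  omega

lemma ff_comp (p : ℕ) :
    (∏ j ∈ Finset.range (p + 1), (X - C (j : ℚ))).comp (X + 1)
      = (∏ j ∈ Finset.range p, (X - C (j : ℚ))) * (X + 1) := by
  rw [Polynomial.prod_comp]
  rw [Finset.prod_range_succ']
  congr 1
  · refine Finset.prod_congr rfl fun i _ => ?_
    simp only [Polynomial.sub_comp, Polynomial.X_comp, Polynomial.C_comp]
    rw [Nat.cast_add, Nat.cast_one, map_add, map_one]
    ring
  · simp

lemma prod_succ_factorial (p : ℕ) : (∏ i ∈ Finset.range p, ((i : ℚ) + 1)) = p.factorial := by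
  induction p with
  | zero => simp
  | succ n ih => rw [Finset.prod_range_succ, ih, Nat.factorial_succ]; push_cast; ring

lemma ff_deriv_eval (p : ℕ) :
    ((∏ j ∈ Finset.range (p + 1), (X - C (j : ℚ))).derivative).eval 0
      = (-1 : ℚ) ^ p * p.factorial := by
  rw [Finset.prod_range_succ' (fun j => (X - C (j : ℚ)))]
  simp only [Nat.cast_zero, map_zero, sub_zero]
  rw [Polynomial.derivative_mul, Polynomial.derivative_X]
  simp only [Polynomial.eval_add, Polynomial.eval_mul, Polynomial.eval_X, Polynomial.eval_one,
    mul_zero, zero_add, mul_one]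
  rw [Polynomial.eval_prod]
  have h : ∀ i ∈ Finset.range p, (X - C ((i + 1 : ℕ) : ℚ)).eval 0 = (-1) * ((i : ℚ) + 1) := by
    intro i _
    simp only [Polynomial.eval_sub, Polynomial.eval_X, Polynomial.eval_C]
    push_cast; ring
  rw [Finset.prod_congr rfl h, Finset.prod_mul_distrib, Finset.prod_const, prod_succ_factorial]
  simp



open Polynomial in
/-- Blissard's binomial identity `C(B, p) = (-1)^p/(p+1)` (convention `B_1 = -1/2`):
with the falling factorial polynomial `P(X) := ∏_{j=0}^{p-1} (X - j)`,
`∑_{k=0}^{p} (coeff of X^k in P) · B_k = (-1)^p · p! / (p+1)`. -/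
theorem blissard_falling_factorial_bernoulli (p : ℕ) :
    ∑ k ∈ Finset.range (p + 1),
        ((∏ j ∈ Finset.range p, (X - C (j : ℚ))).coeff k) * _root_.bernoulli k
      = (-1 : ℚ) ^ p * (Nat.factorial p : ℚ) / (p + 1) := by
  have hL : bernL (∏ j ∈ Finset.range p, (X - C (j : ℚ)))
      = ∑ k ∈ Finset.range (p + 1),
        ((∏ j ∈ Finset.range p, (X - C (j : ℚ))).coeff k) * _root_.bernoulli k :=
    Polynomial.sum_over_range' _ (by simp) (p + 1) (ff_natDegree_lt p)
  have hcomp : (∏ j ∈ Finset.range (p + 1), (X - C (j : ℚ))).comp (X + 1)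
      = (∏ j ∈ Finset.range (p + 1), (X - C (j : ℚ)))
        + ((p : ℚ) + 1) • (∏ j ∈ Finset.range p, (X - C (j : ℚ))) := by
    rw [ff_comp, Finset.prod_range_succ, Polynomial.smul_eq_C_mul, map_add, map_one]
    ring
  have key := bernL_comp_add_one (∏ j ∈ Finset.range (p + 1), (X - C (j : ℚ)))
  rw [hcomp, bernL_add, bernL_smul, ff_deriv_eval] at key
  have h2 : ((p : ℚ) + 1) * bernL (∏ j ∈ Finset.range p, (X - C (j : ℚ)))
      = (-1) ^ p * p.factorial := by linarith
  rw [← hL]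
  have hne : ((p : ℚ) + 1) ≠ 0 := by positivity
  rw [eq_div_iff hne]
  linarith [h2]
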